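/- In the polynomial tensor product ℂ[X,Y]⊗ℂ[S,T], for all natural numbers i, j, k and complex number m: Σ_{t=0}^{j} C(j,t)·( X^i(Y-m)^{j-t}Y ⊗ S^k T^t + X^i Y^{j-t} ⊗ S^k(T-m)^t T ) = Σ_{t=0}^{j} (-m)^t C(j,t) · Σ_{l=0}^{j+1-t} C(j+1-t, l) · X^i Y^{j+1-t-l} ⊗ S^k T^l. -/

import Mathlib

open scoped TensorProduct
open MvPolynomial

open Finset in
lemma key_ring {R : Type*} [CommRing R] (j : ℕ) (u v c w : R) :
    (∑ t ∈ range (j+1), (j.choose t : R) *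
        (w * (u - c)^(j-t) * u * v^t + w * u^(j-t) * (v-c)^t * v))
    = ∑ t ∈ range (j+1), ((-c)^t * (j.choose t : R)) *
        ∑ l ∈ range (j+1-t+1), ((j+1-t).choose l : R) * (w * u^(j+1-t-l) * v^l) := by
  have e1 : ∑ t ∈ range (j+1), (j.choose t : R) * (w * (u - c)^(j-t) * u * v^t)
      = w * u * (v + (u - c))^j := by
    rw [add_pow, Finset.mul_sum]
    exact Finset.sum_congr rfl (fun t ht => by ring)
  have e2 : ∑ t ∈ range (j+1), (j.choose t : R) * (w * u^(j-t) * (v-c)^t * v)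
      = w * v * ((v - c) + u)^j := by
    rw [add_pow, Finset.mul_sum]
    exact Finset.sum_congr rfl (fun t ht => by ring)
  have inner : ∀ n : ℕ, ∑ l ∈ range (n+1), (n.choose l : R) * (w * u^(n-l) * v^l)
      = w * (v + u)^n := by
    intro n
    rw [add_pow, Finset.mul_sum]
    exact Finset.sum_congr rfl (fun l hl => by ring)
  have e3 : ∑ t ∈ range (j+1), ((-c)^t * (j.choose t : R)) *
        ∑ l ∈ range (j+1-t+1), ((j+1-t).choose l : R) * (w * u^(j+1-t-l) * v^l)
      = w * (v + u) * ((-c) + (v + u))^j := by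
    rw [add_pow, Finset.mul_sum]
    refine Finset.sum_congr rfl (fun t ht => ?_)
    rw [inner (j+1-t)]
    have h : j + 1 - t = (j - t) + 1 := by
      rw [Finset.mem_range] at ht; omega
    rw [h, pow_succ]
    ring
  calc (∑ t ∈ range (j+1), (j.choose t : R) *
        (w * (u - c)^(j-t) * u * v^t + w * u^(j-t) * (v-c)^t * v))
      = (∑ t ∈ range (j+1), (j.choose t : R) * (w * (u - c)^(j-t) * u * v^t))
        + ∑ t ∈ range (j+1), (j.choose t : R) * (w * u^(j-t) * (v-c)^t * v) := by
        rw [← Finset.sum_add_distrib]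
        exact Finset.sum_congr rfl (fun t _ => mul_add _ _ _)
    _ = w * u * (v + (u - c))^j + w * v * ((v - c) + u)^j := by rw [e1, e2]
    _ = w * (v + u) * ((-c) + (v + u))^j := by
        have h1 : v + (u - c) = (-c) + (v + u) := by ring
        have h2 : (v - c) + u = (-c) + (v + u) := by ring
        rw [h1, h2]; ring
    _ = _ := e3.symm

theorem stmt12 (i j k : ℕ) (m : ℂ) :
    (∑ t ∈ Finset.range (j + 1), (j.choose t : ℂ) •
        ((((X 0) ^ i * (X 1 - C m) ^ (j - t) * X 1 : MvPolynomial (Fin 2) ℂ) ⊗ₜ[ℂ]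
            ((X 0) ^ k * (X 1) ^ t : MvPolynomial (Fin 2) ℂ))
          + (((X 0) ^ i * (X 1) ^ (j - t) : MvPolynomial (Fin 2) ℂ) ⊗ₜ[ℂ]
            ((X 0) ^ k * (X 1 - C m) ^ t * X 1 : MvPolynomial (Fin 2) ℂ)))
      : MvPolynomial (Fin 2) ℂ ⊗[ℂ] MvPolynomial (Fin 2) ℂ) =
    ∑ t ∈ Finset.range (j + 1), ((-m) ^ t * (j.choose t : ℂ)) •
      ∑ l ∈ Finset.range (j + 1 - t + 1), ((j + 1 - t).choose l : ℂ) •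
        (((X 0) ^ i * (X 1) ^ (j + 1 - t - l) : MvPolynomial (Fin 2) ℂ) ⊗ₜ[ℂ]
          ((X 0) ^ k * (X 1) ^ l : MvPolynomial (Fin 2) ℂ)) := by
  set A := MvPolynomial (Fin 2) ℂ
  letI : CommRing A := inferInstanceAs (CommRing (MvPolynomial (Fin 2) ℂ))
  letI : Algebra ℂ A := inferInstanceAs (Algebra ℂ (MvPolynomial (Fin 2) ℂ))
  set u : A ⊗[ℂ] A := (X 1 : A) ⊗ₜ[ℂ] (1 : A) with hu
  set v : A ⊗[ℂ] A := (1 : A) ⊗ₜ[ℂ] (X 1 : A) with hv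
  set w : A ⊗[ℂ] A := ((X 0 : A) ^ i) ⊗ₜ[ℂ] ((X 0 : A) ^ k) with hw
  set c : A ⊗[ℂ] A := algebraMap ℂ (A ⊗[ℂ] A) m with hcdef
  have hsub : u - c = ((X 1 - C m : A) ⊗ₜ[ℂ] (1:A)) := by
    rw [hcdef, Algebra.TensorProduct.algebraMap_apply, TensorProduct.sub_tmul, hu,
      MvPolynomial.algebraMap_eq]
  have hsub2 : v - c = ((1:A) ⊗ₜ[ℂ] (X 1 - C m : A)) := by
    rw [hcdef, Algebra.TensorProduct.algebraMap_apply', TensorProduct.tmul_sub, hv,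
      MvPolynomial.algebraMap_eq]
  have H1 : ∀ a b : ℕ,
      (((X 0 : A) ^ i * (X 1 - C m) ^ a * X 1) ⊗ₜ[ℂ] ((X 0 : A) ^ k * X 1 ^ b))
        = w * (u - c)^a * u * v^b := by
    intro a b
    rw [hsub, hu, hv, hw]
    simp only [Algebra.TensorProduct.tmul_pow, one_pow,
      Algebra.TensorProduct.tmul_mul_tmul, mul_one, one_mul]
  have H2 : ∀ a b : ℕ,
      (((X 0 : A) ^ i * X 1 ^ a) ⊗ₜ[ℂ] ((X 0 : A) ^ k * (X 1 - C m) ^ b * X 1))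
        = w * u^a * (v - c)^b * v := by
    intro a b
    rw [hsub2, hu, hv, hw]
    simp only [Algebra.TensorProduct.tmul_pow, one_pow,
      Algebra.TensorProduct.tmul_mul_tmul, mul_one, one_mul]
  have H3 : ∀ a b : ℕ,
      (((X 0 : A) ^ i * X 1 ^ a) ⊗ₜ[ℂ] ((X 0 : A) ^ k * X 1 ^ b))
        = w * u^a * v^b := by
    intro a b
    rw [hu, hv, hw]
    simp only [Algebra.TensorProduct.tmul_pow, one_pow,
      Algebra.TensorProduct.tmul_mul_tmul, mul_one, one_mul]
  simp only [H1, H2, H3]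
  have L : ∀ t : ℕ, ∀ x : A ⊗[ℂ] A, (j.choose t : ℂ) • x = (j.choose t : A ⊗[ℂ] A) * x := by
    intro t x
    rw [Algebra.smul_def ((j.choose t : ℂ)) x, map_natCast]
  have Rin : ∀ n l : ℕ, ∀ x : A ⊗[ℂ] A, (n.choose l : ℂ) • x = (n.choose l : A ⊗[ℂ] A) * x := by
    intro n l x
    rw [Algebra.smul_def ((n.choose l : ℂ)) x, map_natCast]
  have Rout : ∀ t : ℕ, ∀ x : A ⊗[ℂ] A,
      ((-m) ^ t * (j.choose t : ℂ)) • x = ((-c) ^ t * (j.choose t : A ⊗[ℂ] A)) * x := by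
    intro t x
    rw [Algebra.smul_def ((-m) ^ t * (j.choose t : ℂ)) x, map_mul, map_pow, map_neg,
      map_natCast, hcdef]
  calc (∑ t ∈ Finset.range (j+1), (j.choose t : ℂ) •
        (w * (u - c)^(j-t) * u * v^t + w * u^(j-t) * (v-c)^t * v))
      = ∑ t ∈ Finset.range (j+1), (j.choose t : A ⊗[ℂ] A) *
        (w * (u - c)^(j-t) * u * v^t + w * u^(j-t) * (v-c)^t * v) :=
        Finset.sum_congr rfl (fun t _ => L t _)
    _ = ∑ t ∈ Finset.range (j+1), ((-c)^t * (j.choose t : A ⊗[ℂ] A)) *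
        ∑ l ∈ Finset.range (j+1-t+1), ((j+1-t).choose l : A ⊗[ℂ] A) *
          (w * u^(j+1-t-l) * v^l) := key_ring j u v c w
    _ = _ := by
        refine Finset.sum_congr rfl (fun t _ => ?_)
        rw [Rout t]
        congr 1
        exact Finset.sum_congr rfl (fun l _ => (Rin (j+1-t) l _).symm)
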